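/- Let Σ be a real symmetric positive definite p×p matrix and K a real skew-symmetric p×p matrix, and set M = KΣ^{-1}. If for all pairs of distinct indices i ≠ j the entries of M satisfy m_{ij} ≠ 0 implies m_{ji} = 0 (i.e., M is supported over a simple graph), then M = 0. -/

import Mathlib

open Matrix MeasureTheory

/-- A real square matrix is *stable* if every eigenvalue (over `ℂ`) has strictly
negative real part. -/
def IsStableMat {n : Type*} [Fintype n] [DecidableEq n] (M : Matrix n n ℝ) : Prop :=
  ∀ μ ∈ spectrum ℂ (M.map (algebraMap ℝ ℂ)), μ.re < 0

/-- `M ∈ ℝ^E`: the matrix `M` is supported on the directed graph with edge set `E`,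
i.e. `M j i = 0` whenever `(i, j) ∉ E`. -/
def InSupp {n : Type*} (E : Set (n × n)) (M : Matrix n n ℝ) : Prop :=
  ∀ i j : n, (i, j) ∉ E → M j i = 0

/-- The graphical continuous Lyapunov model `M_{G,C}`: positive definite matrices `S`
such that `M * S + S * Mᵀ + C = 0` for some `M ∈ ℝ^E`. -/
def LyapModel {n : Type*} [Fintype n] [DecidableEq n] (E : Set (n × n))
    (C : Matrix n n ℝ) : Set (Matrix n n ℝ) :=
  {S | S.PosDef ∧ ∃ M : Matrix n n ℝ, InSupp E M ∧ M * S + S * Mᵀ + C = 0}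

/-- Global identifiability: no two stable matrices supported on `E` yield the same
solution of the Lyapunov equation.  (Since for stable `M` the Lyapunov equation has a
unique positive definite solution `Σ(M,C)`, this is equivalent to every fiber
`F_{G,C}(M₀)` being the singleton `{M₀}`.) -/
def GloballyIdentifiable {n : Type*} [Fintype n] [DecidableEq n] (E : Set (n × n))
    (C : Matrix n n ℝ) : Prop :=
  ∀ M₁ M₂ : Matrix n n ℝ,
    InSupp E M₁ → IsStableMat M₁ → InSupp E M₂ → IsStableMat M₂ →
    ∀ S : Matrix n n ℝ, S.PosDef →
      M₁ * S + S * M₁ᵀ + C = 0 → M₂ * S + S * M₂ᵀ + C = 0 → M₁ = M₂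

/-- A directed graph is *simple* if it has no 2-cycles between distinct nodes. -/
def IsSimpleDigraph {n : Type*} (E : Set (n × n)) : Prop :=
  ∀ i j : n, i ≠ j → (i, j) ∈ E → (j, i) ∉ E

/-- The fiber `F_{G,C}(M₀)`: all stable matrices supported on `E` whose Lyapunov
solution coincides with that of `M₀`, i.e. some positive definite `S` solves the
Lyapunov equation for both `M₀` and `M`. -/
def Fiber {n : Type*} [Fintype n] [DecidableEq n] (E : Set (n × n))
    (C M₀ : Matrix n n ℝ) : Set (Matrix n n ℝ) :=
  {M | InSupp E M ∧ IsStableMat M ∧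
    ∃ S : Matrix n n ℝ, S.PosDef ∧ M₀ * S + S * M₀ᵀ + C = 0 ∧ M * S + S * Mᵀ + C = 0}

/-- The identification of the coordinate space `ℝ^{|E|}` with the matrices in `ℝ^E`:
the coordinate attached to an edge `(i,j)` is the entry `M j i`. -/
def edgeMatrix {p : ℕ} (E : Finset (Fin p × Fin p)) (f : E → ℝ) :
    Matrix (Fin p) (Fin p) ℝ :=
  fun j i => if h : (i, j) ∈ E then f ⟨(i, j), h⟩ else 0

/-- Generic identifiability: the set of parameter vectors `f ∈ ℝ^{|E|}` whose matrix
is stable but whose fiber is not a singleton is a Lebesgue null set. -/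
def GenericallyIdentifiable {p : ℕ} (E : Finset (Fin p × Fin p))
    (C : Matrix (Fin p) (Fin p) ℝ) : Prop :=
  volume {f : E → ℝ | IsStableMat (edgeMatrix E f) ∧
    Fiber (E : Set (Fin p × Fin p)) C (edgeMatrix E f) ≠ {edgeMatrix E f}} = 0

/-- if `M = K * Σ⁻¹` with `K` skew-symmetric and `Σ` positive definite,
and `M` is supported over a simple graph (for distinct `i ≠ j`, `M i j ≠ 0` implies
`M j i = 0`), then `M = 0`. -/
theorem skew_times_posdef_inv_simple_support_eq_zero {p : ℕ}
    (S K M : Matrix (Fin p) (Fin p) ℝ) (hS : S.PosDef) (hK : Kᵀ = -K)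
    (hM : M = K * S⁻¹)
    (hsupp : ∀ i j : Fin p, i ≠ j → M i j ≠ 0 → M j i = 0) :
    M = 0 := by
  have hSinv : (S⁻¹).PosDef := hS.inv
  have hps : (S⁻¹).PosSemidef := hSinv.posSemidef
  set R := (open scoped MatrixOrder in CFC.sqrt (S⁻¹)) with hRdef
  have hRR : R * R = S⁻¹ := by
    open scoped MatrixOrder in exact CFC.sqrt_mul_sqrt_self _ (Matrix.nonneg_iff_posSemidef.mpr hps)
  have hRsymm : Rᵀ = R := by
    have := (open scoped MatrixOrder in (Matrix.nonneg_iff_posSemidef.mp (CFC.sqrt_nonneg (S⁻¹))).1)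
    simpa [Matrix.IsHermitian] using this
  set A := R * K * R with hAdef
  have hAskew : Aᵀ = -A := by
    rw [hAdef, Matrix.transpose_mul, Matrix.transpose_mul, hRsymm, hK]
    noncomm_ring
  have h1 : M * M = (K * R * R * K * R) * R := by
    rw [hM, ← hRR]; noncomm_ring
  have h2 : R * (K * R * R * K * R) = A * A := by
    rw [hAdef]; noncomm_ring
  have htr : (M * M).trace = (A * A).trace := by
    rw [h1, Matrix.trace_mul_comm, h2]
  have htrM : (M * M).trace = ∑ i, (M i i) ^ 2 := by
    rw [Matrix.trace]
    refine Finset.sum_congr rfl fun i _ => ?_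
    rw [Matrix.diag_apply, Matrix.mul_apply]
    rw [Finset.sum_eq_single i]
    · ring
    · intro j _ hji
      by_cases h : M i j = 0
      · rw [h, zero_mul]
      · rw [hsupp i j (Ne.symm hji) h, mul_zero]
    · intro h; exact absurd (Finset.mem_univ i) h
  have htrA : (A * A).trace = -∑ i, ∑ j, (A i j) ^ 2 := by
    rw [Matrix.trace, ← Finset.sum_neg_distrib]
    refine Finset.sum_congr rfl fun i _ => ?_
    rw [Matrix.diag_apply, Matrix.mul_apply, ← Finset.sum_neg_distrib]
    refine Finset.sum_congr rfl fun j _ => ?_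
    have haji : A j i = -A i j := by
      have := congrFun (congrFun hAskew j) i
      simp only [Matrix.transpose_apply, Matrix.neg_apply] at this
      linarith
    rw [haji]; ring
  have hsum : ∑ i, (M i i) ^ 2 = -∑ i, ∑ j, (A i j) ^ 2 := by
    rw [← htrM, htr, htrA]
  have hMnn : (0:ℝ) ≤ ∑ i, (M i i) ^ 2 := Finset.sum_nonneg fun i _ => sq_nonneg _
  have hAnn : (0:ℝ) ≤ ∑ i, ∑ j, (A i j) ^ 2 :=
    Finset.sum_nonneg fun i _ => Finset.sum_nonneg fun j _ => sq_nonneg _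
  have hAzero : ∑ i, ∑ j, (A i j) ^ 2 = 0 := le_antisymm (by linarith [hsum ▸ hMnn]) hAnn
  have hA0 : A = 0 := by
    ext i j
    have h1 := Finset.sum_eq_zero_iff_of_nonneg
      (fun i _ => Finset.sum_nonneg fun j _ => sq_nonneg (A i j)) |>.mp hAzero i (Finset.mem_univ i)
    have h2 := Finset.sum_eq_zero_iff_of_nonneg (fun j _ => sq_nonneg (A i j)) |>.mp h1 j
      (Finset.mem_univ j)
    simpa [pow_eq_zero_iff] using h2
  have hRunit : IsUnit R.det := by
    have hdet : R.det * R.det = (S⁻¹).det := by rw [← Matrix.det_mul, hRR]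
    have : (S⁻¹).det ≠ 0 := hSinv.det_pos.ne'
    exact isUnit_iff_ne_zero.mpr fun h => this (by rw [← hdet, h, mul_zero])
  have hK0 : K = 0 := by
    have : R⁻¹ * (R * K * R) * R⁻¹ = K := by
      rw [← Matrix.mul_assoc, Matrix.mul_assoc (R⁻¹ * (R * K)), Matrix.mul_nonsing_inv _ hRunit,
        Matrix.mul_one, ← Matrix.mul_assoc, Matrix.nonsing_inv_mul _ hRunit, Matrix.one_mul]
    rw [← this, ← hAdef, hA0, Matrix.mul_zero, Matrix.zero_mul]
  rw [hM, hK0, Matrix.zero_mul]
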